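/- Let Ã be a complex unital Banach algebra of the form Ã = A ⊕ M (with multiplication (a,m)(b,n) = (ab + Ω(mn), mb + an + Γ(mn)) extending that of the semisimple Banach algebra A), and suppose that for every rank one projection p in a generating class P of Soc(A) and all x, z ∈ A one has (pz, 0)(a, u)(x, 0)(p, 0) = (p z a x p, 0). Then the Jacobson radical of Ã is contained in {(0, u) : u ∈ M}; i.e., if (a, u) ∈ Rad(Ã) then a = 0. -/

import Mathlib

noncomputable section

/-- `rank a ≤ n`. -/
def rankLE {A : Type*} [NormedRing A] [NormedAlgebra ℂ A] (a : A) (n : ℕ) : Prop :=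
  ∀ x : A, (spectrum ℂ (x * a) \ {0}).Finite ∧ (spectrum ℂ (x * a) \ {0}).ncard ≤ n

/-- `rank a = n`. -/
def hasRank {A : Type*} [NormedRing A] [NormedAlgebra ℂ A] (a : A) (n : ℕ) : Prop :=
  rankLE a n ∧ ∃ x : A, (spectrum ℂ (x * a) \ {0}).ncard = n

/-- An element of the Jacobson radical is quasi-regular, with a two-sided
quasi-inverse. -/
lemma jac_twoSidedUnit {R : Type*} [Ring R] {w : R}
    (hw : w ∈ Ideal.jacobson (⊥ : Ideal R)) (y : R) :
    ∃ z : R, z * (1 + y * w) = 1 ∧ (1 + y * w) * z = 1 := by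
  obtain ⟨z, hz⟩ := Ideal.mem_jacobson_iff.1 hw y
  rw [Ideal.mem_bot, sub_eq_zero] at hz
  have hz1 : z * (1 + y * w) = 1 := by
    rw [mul_add, mul_one, ← mul_assoc, add_comm]; exact hz
  obtain ⟨z₂, hz₂⟩ := Ideal.mem_jacobson_iff.1 hw (-(z * y))
  rw [Ideal.mem_bot, sub_eq_zero] at hz₂
  have hzz : z = 1 - z * y * w := by
    rw [eq_sub_iff_add_eq, add_comm]; exact hz
  have hz2 : z₂ * z = 1 := by
    nth_rewrite 1 [hzz]
    calc z₂ * (1 - z * y * w) = z₂ * -(z * y) * w + z₂ := by noncomm_ring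
      _ = 1 := hz₂
  have hz3 : z₂ = 1 + y * w := by
    calc z₂ = z₂ * (z * (1 + y * w)) := by rw [hz1, mul_one]
      _ = z₂ * z * (1 + y * w) := (mul_assoc _ _ _).symm
      _ = 1 + y * w := by rw [hz2, one_mul]
  exact ⟨z, hz1, by rw [← hz3]; exact hz2⟩

/-- Left multiples of an element of the Jacobson radical are quasinilpotent. -/
lemma spec_mul_jac {B : Type*} [Ring B] [Algebra ℂ B] {w : B}
    (hw : w ∈ Ideal.jacobson (⊥ : Ideal B)) (s : B) :
    spectrum ℂ (s * w) ⊆ {0} := by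
  intro μ hμ
  rcases eq_or_ne μ 0 with h0 | h0
  · exact h0 ▸ rfl
  exfalso
  apply spectrum.mem_iff.1 hμ
  have h1 : algebraMap ℂ B μ * algebraMap ℂ B μ⁻¹ = 1 := by
    rw [← map_mul, mul_inv_cancel₀ h0, map_one]
  have key : algebraMap ℂ B μ * (1 + -(algebraMap ℂ B μ⁻¹ * s) * w)
      = algebraMap ℂ B μ - s * w := by
    calc algebraMap ℂ B μ * (1 + -(algebraMap ℂ B μ⁻¹ * s) * w)
        = algebraMap ℂ B μ - (algebraMap ℂ B μ * algebraMap ℂ B μ⁻¹) * (s * w) := by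
          noncomm_ring
      _ = algebraMap ℂ B μ - s * w := by rw [h1, one_mul]
  obtain ⟨z, hzl, hzr⟩ := jac_twoSidedUnit hw (-(algebraMap ℂ B μ⁻¹ * s))
  rw [← key]
  exact (IsUnit.map (algebraMap ℂ B) (isUnit_iff_ne_zero.2 h0)).mul
    ⟨⟨1 + -(algebraMap ℂ B μ⁻¹ * s) * w, z, hzr, hzl⟩, rfl⟩

/-- The radical of the extension `B = A ⊕ M` lies inside `{(0, u) : u ∈ M}`: if
`(a, u) ∈ Rad(B)` then `a = 0`. -/
theorem radical_of_extension_in_M {A B : Type*} [NormedRing A] [NormedAlgebra ℂ A]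
    [CompleteSpace A] [NormedRing B] [NormedAlgebra ℂ B] [CompleteSpace B]
    (hss : ∀ a : A, (∀ x : A, spectrum ℂ (a * x) ⊆ {0}) → a = 0)
    (e : A →ₐ[ℂ] B) (M : Submodule ℂ B)
    (hdecomp : ∀ x : B, ∃ (a : A) (u : B), u ∈ M ∧ x = e a + u)
    (huniq : ∀ (a : A) (u : B), u ∈ M → e a + u = 0 → a = 0)
    (P : Set A)
    (hP : ∀ p ∈ P, IsIdempotentElem p ∧ hasRank p 1)
    (hPgen : ∀ b : A, (∀ p ∈ P, ∀ x : A, b * x * p = 0) → b = 0)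
    (hmulid : ∀ p ∈ P, ∀ (z x a : A), ∀ u ∈ M,
      e (p * z) * (e a + u) * e x * e p = e (p * z * a * x * p))
    (a : A) (u : B) (hu : u ∈ M)
    (hrad : e a + u ∈ Ideal.jacobson (⊥ : Ideal B)) :
    a = 0 := by
  -- injectivity of the embedding
  have hinj : Function.Injective e := by
    intro a₁ a₂ h
    have h0 : e (a₁ - a₂) + 0 = 0 := by rw [map_sub, h, sub_self, add_zero]
    exact sub_eq_zero.1 (huniq (a₁ - a₂) 0 M.zero_mem h0)
  -- two-sided multiples of the radical element `w := e a + u` are quasinilpotent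
  have specw : ∀ g h : B, spectrum ℂ (g * (e a + u) * h) ⊆ {0} := by
    intro g h μ hμ
    rcases eq_or_ne μ 0 with h0 | h0
    · exact h0 ▸ rfl
    have hμ1 : μ ∈ spectrum ℂ (g * (e a + u) * h) \ {0} := ⟨hμ, h0⟩
    have st : spectrum ℂ (g * (e a + u) * h) \ {0}
        = spectrum ℂ (h * g * (e a + u)) \ {0} := by
      rw [spectrum.nonzero_mul_comm, ← mul_assoc]
    rw [st] at hμ1
    exact spec_mul_jac hrad (h * g) hμ1.1
  -- the corner lemma: compressions `p z a x p` are quasinilpotent in `A`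
  have corner : ∀ p ∈ P, ∀ z x : A, spectrum ℂ (p * z * a * x * p) ⊆ {0} := by
    intro p hp z x μ hμ
    rcases eq_or_ne μ 0 with h0 | h0
    · exact h0 ▸ rfl
    exfalso
    have hpp : p * p = p := (hP p hp).1
    set c : A := p * z * a * x * p with hc
    have hpc : p * c = c := by
      rw [hc]; simp only [← mul_assoc]; rw [hpp]
    have hcp : c * p = c := by rw [hc, mul_assoc, hpp]
    have hec : e c = e (p * z) * (e a + u) * e x * e p := (hmulid p hp z x a u hu).symm
    -- invertibility of `μ - e c` in `B`
    have hsub : spectrum ℂ (e c) ⊆ {0} := by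
      rw [hec, mul_assoc]
      exact specw (e (p * z)) (e x * e p)
    have hBunit : IsUnit (algebraMap ℂ B μ - e c) :=
      spectrum.notMem_iff.1 fun hmem => h0 (hsub hmem)
    obtain ⟨v, hv⟩ := hBunit
    set b : B := (↑v⁻¹ : B) with hbv
    have hv1 : (algebraMap ℂ B μ - e c) * b = 1 := by rw [← hv]; exact v.mul_inv
    have hv2 : b * (algebraMap ℂ B μ - e c) = 1 := by rw [← hv]; exact v.inv_mul
    obtain ⟨a', u', hu', hb⟩ := hdecomp b
    have H1 := hmulid p hp 1 1 a' u' hu'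
    have H2 := hmulid p hp c 1 a' u' hu'
    have H3 := hmulid p hp 1 c a' u' hu'
    rw [← hb] at H1 H2 H3
    simp only [map_one, mul_one] at H1 H2 H3
    -- H1 : e p * b * e p = e (p * a' * p)
    -- H2 : e (p*c) * b * e p = e (p * c * a' * p)
    rw [hpc] at H2
    -- H3 : e p * b * e c * e p = e (p * a' * c * p)
    have hacp : p * a' * c * p = p * a' * c := by rw [mul_assoc, hcp]
    rw [hacp] at H3
    -- the two key identities in A
    have hb1 : μ • b = 1 + e c * b := by
      have h := hv1
      rw [Algebra.algebraMap_eq_smul_one, sub_mul, smul_mul_assoc, one_mul] at h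
      exact eq_add_of_sub_eq h
    have hb2 : μ • b = 1 + b * e c := by
      have h := hv2
      rw [Algebra.algebraMap_eq_smul_one, mul_sub, mul_smul_comm, mul_one] at h
      exact eq_add_of_sub_eq h
    have E1 : μ • (p * a' * p) = p + c * a' * p := by
      apply hinj
      calc e (μ • (p * a' * p)) = μ • (e p * b * e p) := by rw [map_smul, H1]
        _ = e p * (μ • b) * e p := by
            simp only [smul_mul_assoc, mul_smul_comm]
        _ = e p * (1 + e c * b) * e p := by rw [hb1]
        _ = e p * e p + e p * e c * b * e p := by noncomm_ring
        _ = e p + e c * b * e p := by rw [← map_mul, hpp, ← map_mul, hpc]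
        _ = e (p + c * a' * p) := by rw [H2, map_add]
    have E2 : μ • (p * a' * p) = p + p * a' * c := by
      apply hinj
      calc e (μ • (p * a' * p)) = μ • (e p * b * e p) := by rw [map_smul, H1]
        _ = e p * (μ • b) * e p := by
            simp only [smul_mul_assoc, mul_smul_comm]
        _ = e p * (1 + b * e c) * e p := by rw [hb2]
        _ = e p * e p + e p * b * e c * e p := by noncomm_ring
        _ = e p + e p * b * e c * e p := by rw [← map_mul, hpp]
        _ = e (p + p * a' * c) := by rw [H3, map_add]
    -- build the inverse of `μ - c` in `A`
    have hcd : c * (p * a' * p) = c * a' * p := by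
      rw [← mul_assoc, ← mul_assoc, hcp]
    have hdc : (p * a' * p) * c = p * a' * c := by rw [mul_assoc, hpc]
    have hr : (μ • (1 : A) - c) * (μ⁻¹ • (1 - p) + p * a' * p) = 1 := by
      rw [mul_add]
      have t1 : (μ • (1 : A) - c) * (μ⁻¹ • (1 - p)) = 1 - p := by
        have h' : (μ • (1 : A) - c) * (1 - p) = μ • (1 - p) := by
          rw [sub_mul, smul_mul_assoc, one_mul, mul_sub, mul_one, hcp, smul_sub]
          abel
        rw [mul_smul_comm, h', smul_smul, inv_mul_cancel₀ h0, one_smul]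
      have t2 : (μ • (1 : A) - c) * (p * a' * p) = p := by
        rw [sub_mul, smul_mul_assoc, one_mul, hcd, E1, add_sub_cancel_right]
      rw [t1, t2, sub_add_cancel]
    have hl : (μ⁻¹ • (1 - p) + p * a' * p) * (μ • (1 : A) - c) = 1 := by
      rw [add_mul]
      have t1 : (μ⁻¹ • (1 - p)) * (μ • (1 : A) - c) = 1 - p := by
        have h' : (1 - p) * (μ • (1 : A) - c) = μ • (1 - p) := by
          rw [sub_mul, one_mul, mul_sub, mul_smul_comm, mul_one, hpc, smul_sub]
          abel
        rw [smul_mul_assoc, h', smul_smul, inv_mul_cancel₀ h0, one_smul]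
      have t2 : (p * a' * p) * (μ • (1 : A) - c) = p := by
        rw [mul_sub, mul_smul_comm, mul_one, hdc, E2, add_sub_cancel_right]
      rw [t1, t2, sub_add_cancel]
    apply spectrum.mem_iff.1 hμ
    rw [Algebra.algebraMap_eq_smul_one]
    exact ⟨⟨μ • (1 : A) - c, μ⁻¹ • (1 - p) + p * a' * p, hr, hl⟩, rfl⟩
  -- conclude via the generating family of projections and semisimplicity
  apply hPgen
  intro p hp x
  apply hss
  intro y μ hμ
  rcases eq_or_ne μ 0 with h0 | h0
  · exact h0 ▸ rfl
  have hpp : p * p = p := (hP p hp).1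
  have hμ1 : μ ∈ spectrum ℂ (a * x * p * y) \ {0} := ⟨hμ, h0⟩
  have st1 : spectrum ℂ (a * x * p * y) \ {0} = spectrum ℂ (y * a * x * p) \ {0} := by
    rw [spectrum.nonzero_mul_comm,
      show y * (a * x * p) = y * a * x * p from by noncomm_ring]
  have st2 : spectrum ℂ (y * a * x * p) \ {0}
      = spectrum ℂ (p * y * a * x * p) \ {0} := by
    have h1 : y * a * x * p = (y * a * x * p) * p := by
      rw [mul_assoc (y * a * x) p p, hpp]
    rw [h1, spectrum.nonzero_mul_comm,
      show p * (y * a * x * p) = p * y * a * x * p from by noncomm_ring]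
  rw [st1, st2] at hμ1
  exact corner p hp y x hμ1.1
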